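/- Assume H_X Sᵀ = T H_G and J_{X,C} Sᵀ = γ H_G. Let d ≥ 1 and suppose the memory has distance at least d in the following sense: every e ∈ 𝔽₂^n with H_X eᵀ = 0 and J_{X,C} eᵀ ≠ 0 satisfies |e| ≥ d, and every e ∈ 𝔽₂^n with H_Z eᵀ = 0 and J_{Z,C} eᵀ ≠ 0 satisfies |e| ≥ d. Let w ≥ 1 be a natural number such that |uS| ≤ w·|u| for all u ∈ 𝔽₂^{n_G}. Then: (a) every e with H^{MM}_X eᵀ = 0 and J^{MM}_X eᵀ ≠ 0 satisfies w·|e| ≥ d or |e| ≥ d_R (hence |e| ≥ min{d/w, d_R}); (b) every e with H^{MM}_Z eᵀ = 0 and J^{MM}_Z eᵀ ≠ 0 satisfies |e| ≥ d. In particular the measurement-sticker deformed code has distance at least min{d/w, d_R}. -/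

import Mathlib

open Matrix

/-- The `X`-check matrix of the measurement-sticker deformed code, with `d_R = m + 1`.
Column blocks: `u_0` (`Fin n`), `u_1,…,u_m` (`Fin m × Fin nG`, index `j0` is `u_{j0+1}`),
`v_1,…,v_{m+1}` (`Fin (m+1) × Fin rG`, index `i0` is `v_{i0+1}`). -/
def HMMX (m : ℕ) {n nG rX rG : ℕ} (HX : Matrix (Fin rX) (Fin n) (ZMod 2))
    (HG : Matrix (Fin rG) (Fin nG) (ZMod 2))
    (T : Matrix (Fin rX) (Fin rG) (ZMod 2)) :
    Matrix (Fin rX ⊕ Fin m × Fin rG)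
      (Fin n ⊕ (Fin m × Fin nG ⊕ Fin (m + 1) × Fin rG)) (ZMod 2) :=
  Matrix.of fun r c =>
    match r, c with
    | Sum.inl a, Sum.inl j => HX a j
    | Sum.inl _, Sum.inr (Sum.inl _) => 0
    | Sum.inl a, Sum.inr (Sum.inr (i, b)) => if (i : ℕ) = 0 then T a b else 0
    | Sum.inr _, Sum.inl _ => 0
    | Sum.inr (j0, a), Sum.inr (Sum.inl (j', c')) => if j' = j0 then HG a c' else 0
    | Sum.inr (j0, a), Sum.inr (Sum.inr (i, b)) =>
        if ((i : ℕ) = (j0 : ℕ) ∨ (i : ℕ) = (j0 : ℕ) + 1) ∧ b = a then 1 else 0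

/-- The `Z`-check matrix of the measurement-sticker deformed code, with `d_R = m + 1`.
Row blocks: memory `Z` checks (`Fin rZ`) and sticker `Z` checks `i = 1,…,m+1`
(`Fin (m+1) × Fin nG`, index `i0` is check row `i0+1`). -/
def HMMZ (m : ℕ) {n nG rZ rG : ℕ} (HZ : Matrix (Fin rZ) (Fin n) (ZMod 2))
    (HG : Matrix (Fin rG) (Fin nG) (ZMod 2))
    (S : Matrix (Fin nG) (Fin n) (ZMod 2)) :
    Matrix (Fin rZ ⊕ Fin (m + 1) × Fin nG)
      (Fin n ⊕ (Fin m × Fin nG ⊕ Fin (m + 1) × Fin rG)) (ZMod 2) :=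
  Matrix.of fun r c =>
    match r, c with
    | Sum.inl a, Sum.inl j => HZ a j
    | Sum.inl _, Sum.inr _ => 0
    | Sum.inr (i, cc), Sum.inl j => if (i : ℕ) = 0 then S cc j else 0
    | Sum.inr (i, cc), Sum.inr (Sum.inl (j0, c')) =>
        if ((j0 : ℕ) + 1 = (i : ℕ) ∨ (j0 : ℕ) = (i : ℕ)) ∧ c' = cc then 1 else 0
    | Sum.inr (i, cc), Sum.inr (Sum.inr (i', b)) =>
        if (i' : ℕ) = (i : ℕ) then HG b cc else 0


/-- The `X` logical generator matrix of the measurement-sticker deformed code: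
`J_{X,C}` in block `u_0`, `J_{X,C}Sᵀ` in each block `u_j`, `γ` in block `v_{d_R}`. -/
def JMMX (m : ℕ) {n nG rG p : ℕ} (JXC : Matrix (Fin p) (Fin n) (ZMod 2))
    (S : Matrix (Fin nG) (Fin n) (ZMod 2))
    (γ : Matrix (Fin p) (Fin rG) (ZMod 2)) :
    Matrix (Fin p) (Fin n ⊕ (Fin m × Fin nG ⊕ Fin (m + 1) × Fin rG)) (ZMod 2) :=
  Matrix.of fun a c =>
    match c with
    | Sum.inl j => JXC a j
    | Sum.inr (Sum.inl (_, c')) => (JXC * Sᵀ) a c'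
    | Sum.inr (Sum.inr (i, b)) => if (i : ℕ) = m then γ a b else 0

/-- The `Z` logical generator matrix of the measurement-sticker deformed code:
`J_{Z,C}` in block `u_0`, zero elsewhere. -/
def JMMZ (m nG rG : ℕ) {n p : ℕ} (JZC : Matrix (Fin p) (Fin n) (ZMod 2)) :
    Matrix (Fin p) (Fin n ⊕ (Fin m × Fin nG ⊕ Fin (m + 1) × Fin rG)) (ZMod 2) :=
  Matrix.of fun a c =>
    match c with
    | Sum.inl j => JZC a j
    | Sum.inr _ => 0

/-- Hamming weight of a vector. -/
def wt {ι : Type*} [Fintype ι] (v : ι → ZMod 2) : ℕ :=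
  (Finset.univ.filter fun i => v i ≠ 0).card

/- ### auxiliary lemmas -/

lemma zmod2_add_eq_zero_iff {a b : ZMod 2} : a + b = 0 ↔ a = b := by
  constructor
  · intro h
    have h2 : a + b + b = b := by rw [h]; ring
    rwa [add_assoc, CharTwo.add_self_eq_zero, add_zero] at h2
  · intro h; rw [h]; exact CharTwo.add_self_eq_zero b

lemma vec2_add_self {ι : Type*} (v : ι → ZMod 2) : v + v = 0 :=
  funext fun _ => CharTwo.add_self_eq_zero _

lemma vec2_add_eq_zero_iff {ι : Type*} {u v : ι → ZMod 2} : u + v = 0 ↔ u = v := by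
  constructor
  · intro h; funext i
    exact zmod2_add_eq_zero_iff.mp (congrFun h i)
  · intro h; rw [h]; exact vec2_add_self v

lemma wt_eq_sum {ι : Type*} [Fintype ι] (v : ι → ZMod 2) :
    wt v = ∑ i, if v i ≠ 0 then 1 else 0 := by
  simp [wt, Finset.card_filter]

lemma wt_add_le {ι : Type*} [Fintype ι] (u v : ι → ZMod 2) :
    wt (u + v) ≤ wt u + wt v := by
  classical
  refine le_trans (Finset.card_le_card ?_) (Finset.card_union_le _ _)
  intro i hi
  simp only [Finset.mem_filter, Finset.mem_union, Finset.mem_univ, true_and] at *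
  by_contra h
  push_neg at h
  exact hi (by simp [Pi.add_apply, h.1, h.2])

lemma wt_sum_le {ι κ : Type*} [Fintype ι] [DecidableEq κ] (s : Finset κ)
    (f : κ → ι → ZMod 2) : wt (∑ j ∈ s, f j) ≤ ∑ j ∈ s, wt (f j) := by
  classical
  induction s using Finset.induction_on with
  | empty => simp [wt]
  | insert a s' hx ih =>
      rw [Finset.sum_insert hx, Finset.sum_insert hx]
      exact le_trans (wt_add_le _ _) (Nat.add_le_add_left ih _)

lemma wt_sum_idx {ι κ : Type*} [Fintype ι] [Fintype κ] (v : ι ⊕ κ → ZMod 2) :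
    wt v = wt (v ∘ Sum.inl) + wt (v ∘ Sum.inr) := by
  simp [wt_eq_sum, Fintype.sum_sum_type]

lemma wt_prod {ι κ : Type*} [Fintype ι] [Fintype κ] (v : ι × κ → ZMod 2) :
    wt v = ∑ i, wt (fun k => v (i, k)) := by
  simp [wt_eq_sum, Fintype.sum_prod_type]

lemma wt_pos {ι : Type*} [Fintype ι] {v : ι → ZMod 2} (h : v ≠ 0) : 1 ≤ wt v := by
  obtain ⟨i, hi⟩ := Function.ne_iff.mp h
  have hmem : i ∈ Finset.univ.filter fun i => v i ≠ 0 := by simpa using hi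
  exact Finset.card_pos.mpr ⟨i, hmem⟩

lemma sum_ite_nat {N : ℕ} (k : ℕ) (hk : k < N) (X : Fin N → ZMod 2) :
    ∑ i : Fin N, (if (i : ℕ) = k then X i else 0) = X ⟨k, hk⟩ := by
  rw [Finset.sum_eq_single ⟨k, hk⟩]
  · simp
  · intro i _ hik
    rw [if_neg (fun hv => hik (Fin.ext hv))]
  · simp

lemma ite_or_add {P Q : Prop} [Decidable P] [Decidable Q] (h : ¬(P ∧ Q)) (x : ZMod 2) :
    (if P ∨ Q then x else 0) = (if P then x else 0) + (if Q then x else 0) := by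
  by_cases hP : P <;> by_cases hQ : Q <;> simp [hP, hQ] <;> exact absurd ⟨hP, hQ⟩ h

lemma mulVec_sum {α β κ : Type*} [Fintype β] (M : Matrix α β (ZMod 2))
    (s : Finset κ) (f : κ → β → ZMod 2) :
    M.mulVec (∑ j ∈ s, f j) = ∑ j ∈ s, M.mulVec (f j) := by
  simpa only [Matrix.mulVecLin_apply] using map_sum M.mulVecLin f s

set_option maxHeartbeats 1000000 in
/-- distance bound for the measurement-sticker deformed code
(`d_R = m + 1`). If the memory has distance at least `d` and `|uS| ≤ w |u|`, then
(a) every `X`-type logical error `e` of the deformed code satisfies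
`w·|e| ≥ d` or `|e| ≥ d_R`, and (b) every `Z`-type logical error `e` satisfies
`|e| ≥ d`; hence the deformed code has distance at least `min {d/w, d_R}`. -/
theorem measurement_sticker_distance (m : ℕ) (hm : 1 ≤ m) {n nG rX rZ rG p : ℕ}
    (HX : Matrix (Fin rX) (Fin n) (ZMod 2))
    (HZ : Matrix (Fin rZ) (Fin n) (ZMod 2))
    (HG : Matrix (Fin rG) (Fin nG) (ZMod 2))
    (S : Matrix (Fin nG) (Fin n) (ZMod 2))
    (T : Matrix (Fin rX) (Fin rG) (ZMod 2))
    (JXC JZC : Matrix (Fin p) (Fin n) (ZMod 2))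
    (γ : Matrix (Fin p) (Fin rG) (ZMod 2))
    (hcompat : HX * Sᵀ = T * HG)
    (hγ : JXC * Sᵀ = γ * HG)
    (d : ℕ) (hd : 1 ≤ d)
    (hdX : ∀ e : Fin n → ZMod 2, HX.mulVec e = 0 → JXC.mulVec e ≠ 0 → d ≤ wt e)
    (hdZ : ∀ e : Fin n → ZMod 2, HZ.mulVec e = 0 → JZC.mulVec e ≠ 0 → d ≤ wt e)
    (w : ℕ) (hw : 1 ≤ w)
    (hwS : ∀ u : Fin nG → ZMod 2, wt (vecMul u S) ≤ w * wt u) :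
    (∀ e : Fin n ⊕ (Fin m × Fin nG ⊕ Fin (m + 1) × Fin rG) → ZMod 2,
      (HMMX m HX HG T).mulVec e = 0 → (JMMX m JXC S γ).mulVec e ≠ 0 →
        d ≤ w * wt e ∨ m + 1 ≤ wt e) ∧
    (∀ e : Fin n ⊕ (Fin m × Fin nG ⊕ Fin (m + 1) × Fin rG) → ZMod 2,
      (HMMZ m HZ HG S).mulVec e = 0 → (JMMZ m nG rG JZC).mulVec e ≠ 0 →
        d ≤ wt e) := by
  classical
  constructor
  · -- part (a)
    intro e hXe hJe
    -- block components
    set E : Fin n → ZMod 2 := fun j => e (Sum.inl j) with hEdef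
    set f : Fin m → Fin nG → ZMod 2 :=
      fun j0 c => e (Sum.inr (Sum.inl (j0, c))) with hfdef
    set g : Fin (m + 1) → Fin rG → ZMod 2 :=
      fun i b => e (Sum.inr (Sum.inr (i, b))) with hgdef
    -- first block row of H^MM_X
    have h1 : HX.mulVec E = T.mulVec (g 0) := by
      funext a
      have h := congrFun hXe (Sum.inl a)
      simp only [HMMX, Matrix.mulVec, dotProduct, Fintype.sum_sum_type,
        Fintype.sum_prod_type, Matrix.of_apply, Pi.zero_apply, zero_mul,
        Finset.sum_const_zero, add_zero, zero_add, ite_mul, one_mul,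
        Finset.sum_ite_irrel] at h
      rw [sum_ite_nat 0 (Nat.succ_pos m)] at h
      exact zmod2_add_eq_zero_iff.mp h
    -- sticker block rows of H^MM_X
    have h2 : ∀ j0 : Fin m, g j0.succ = g j0.castSucc + HG.mulVec (f j0) := by
      intro j0
      funext a
      have h := congrFun hXe (Sum.inr (j0, a))
      simp only [HMMX, Matrix.mulVec, dotProduct, Fintype.sum_sum_type,
        Fintype.sum_prod_type, Matrix.of_apply, Pi.zero_apply, zero_mul,
        Finset.sum_const_zero, add_zero, zero_add, ite_mul, one_mul,
        Finset.sum_ite_irrel, Finset.sum_ite_eq', Finset.mem_univ, if_true,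
        ite_and] at h
      have hsplit : ∀ i : Fin (m + 1),
          (if (i : ℕ) = (j0 : ℕ) ∨ (i : ℕ) = (j0 : ℕ) + 1
              then e (Sum.inr (Sum.inr (i, a))) else 0)
            = (if (i : ℕ) = (j0 : ℕ) then e (Sum.inr (Sum.inr (i, a))) else 0)
              + (if (i : ℕ) = (j0 : ℕ) + 1 then e (Sum.inr (Sum.inr (i, a))) else 0) :=
        fun i => ite_or_add (by omega) _
      simp only [hsplit] at h
      rw [Finset.sum_add_distrib,
        sum_ite_nat (j0 : ℕ) (by omega) (fun i => e (Sum.inr (Sum.inr (i, a)))),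
        sum_ite_nat ((j0 : ℕ) + 1) (by omega)
          (fun i => e (Sum.inr (Sum.inr (i, a))))] at h
      have key2 : ∀ x y z : ZMod 2, x + (y + z) = 0 → z = y + x := by decide
      exact key2 _ _ _ h
    -- telescoping of the g chain
    have key : ∀ k : ℕ, (hk : k ≤ m) →
        g ⟨k, Nat.lt_succ_of_le hk⟩ = g 0 + HG.mulVec
          (∑ j0 ∈ Finset.univ.filter (fun j0 : Fin m => (j0 : ℕ) < k), f j0) := by
      intro k
      induction k with
      | zero =>
          intro _
          have hfil : (Finset.univ.filter fun j0 : Fin m => (j0 : ℕ) < 0) = ∅ := by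
            ext j0; simp
          rw [hfil, Finset.sum_empty, Matrix.mulVec_zero, add_zero]
          exact congrArg g (Fin.ext (by simp))
      | succ k ih =>
          intro hk
          have hkm : k < m := hk
          have hfil : (Finset.univ.filter fun j0 : Fin m => (j0 : ℕ) < k + 1)
              = insert (⟨k, hkm⟩ : Fin m)
                  (Finset.univ.filter fun j0 : Fin m => (j0 : ℕ) < k) := by
            ext j0
            simp only [Finset.mem_filter, Finset.mem_insert, Finset.mem_univ, true_and,
              Fin.ext_iff]
            omega
          rw [hfil, Finset.sum_insert (by simp)]
          have hstep : g ⟨k + 1, Nat.lt_succ_of_le hk⟩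
              = g ⟨k, Nat.lt_succ_of_le hkm.le⟩ + HG.mulVec (f ⟨k, hkm⟩) :=
            h2 ⟨k, hkm⟩
          rw [hstep, ih hkm.le, Matrix.mulVec_add]
          abel
    -- total sum of the f blocks
    have hfilm : (Finset.univ.filter fun j0 : Fin m => (j0 : ℕ) < m)
        = Finset.univ := by
      ext j0; simp [j0.isLt]
    have hlast : g (Fin.last m) = g 0 + HG.mulVec (∑ j0 : Fin m, f j0) := by
      have hh := key m le_rfl
      rw [hfilm] at hh
      exact hh
    -- decomposition of the logical syndrome
    have hJdec : (JMMX m JXC S γ).mulVec e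
        = JXC.mulVec E + ((JXC * Sᵀ).mulVec (∑ j : Fin m, f j)
            + γ.mulVec (g (Fin.last m))) := by
      funext a
      simp only [JMMX, Matrix.mulVec, dotProduct, Fintype.sum_sum_type,
        Fintype.sum_prod_type, Matrix.of_apply, ite_mul, zero_mul,
        Finset.sum_ite_irrel, Finset.sum_const_zero]
      rw [sum_ite_nat m (by omega)]
      have hB : (∑ j : Fin m, ∑ c, (JXC * Sᵀ) a c * e (Sum.inr (Sum.inl (j, c))))
          = ((JXC * Sᵀ).mulVec (∑ j : Fin m, f j)) a := by
        simp only [Matrix.mulVec, dotProduct, Finset.sum_apply, Finset.mul_sum]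
        exact Finset.sum_comm
      rw [hB]
      rfl
    -- simplified syndrome
    have hsynd : (JMMX m JXC S γ).mulVec e
        = JXC.mulVec E + γ.mulVec (g 0) := by
      rw [hJdec, hγ, hlast, ← Matrix.mulVec_mulVec, Matrix.mulVec_add]
      funext i
      have harith : ∀ a x y : ZMod 2, a + (x + (y + x)) = a + y := by decide
      exact harith _ _ _
    have hs : JXC.mulVec E + γ.mulVec (g 0) ≠ 0 := by
      rw [← hsynd]; exact hJe
    -- weight decomposition of e
    have hwdec : wt e = wt E
        + (wt (fun x : Fin m × Fin nG => e (Sum.inr (Sum.inl x)))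
          + wt (fun x : Fin (m + 1) × Fin rG => e (Sum.inr (Sum.inr x)))) := by
      rw [wt_sum_idx e, wt_sum_idx (e ∘ Sum.inr)]
      rfl
    have hwf : wt (fun x : Fin m × Fin nG => e (Sum.inr (Sum.inl x)))
        = ∑ j : Fin m, wt (f j) := wt_prod _
    have hwg : wt (fun x : Fin (m + 1) × Fin rG => e (Sum.inr (Sum.inr x)))
        = ∑ i : Fin (m + 1), wt (g i) := wt_prod _
    by_cases hg : ∃ i : Fin (m + 1), g i = 0
    · -- some g i vanishes: space-like logical of weight ≥ d/w
      left
      obtain ⟨i, hgi⟩ := hg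
      set Fk : Fin nG → ZMod 2 :=
        ∑ j0 ∈ Finset.univ.filter (fun j0 : Fin m => (j0 : ℕ) < (i : ℕ)), f j0
        with hFkdef
      have h5 : g i = g 0 + HG.mulVec Fk := key (i : ℕ) (by omega)
      have h6 : HG.mulVec Fk = g 0 := by
        rw [hgi] at h5
        exact (vec2_add_eq_zero_iff.mp h5.symm).symm
      have hHX0 : HX.mulVec (E + Sᵀ.mulVec Fk) = 0 := by
        rw [Matrix.mulVec_add, h1, Matrix.mulVec_mulVec, hcompat,
          ← Matrix.mulVec_mulVec, h6]
        exact vec2_add_self _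
      have hJX0 : JXC.mulVec (E + Sᵀ.mulVec Fk) = JXC.mulVec E + γ.mulVec (g 0) := by
        rw [Matrix.mulVec_add, Matrix.mulVec_mulVec, hγ,
          ← Matrix.mulVec_mulVec, h6]
      have hd1 : d ≤ wt (E + Sᵀ.mulVec Fk) :=
        hdX _ hHX0 (by rw [hJX0]; exact hs)
      have hw1 : wt (E + Sᵀ.mulVec Fk) ≤ wt E + w * wt Fk := by
        refine le_trans (wt_add_le _ _) (Nat.add_le_add_left ?_ _)
        rw [Matrix.mulVec_transpose]
        exact hwS Fk
      have hw2 : wt Fk ≤ ∑ j : Fin m, wt (f j) := by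
        refine le_trans (wt_sum_le _ _) ?_
        exact Finset.sum_le_sum_of_subset (Finset.filter_subset _ _)
      have hw3 : wt E + ∑ j : Fin m, wt (f j) ≤ wt e := by
        rw [hwdec, hwf]
        omega
      calc d ≤ wt (E + Sᵀ.mulVec Fk) := hd1
        _ ≤ wt E + w * wt Fk := hw1
        _ ≤ wt E + w * ∑ j : Fin m, wt (f j) :=
            Nat.add_le_add_left (Nat.mul_le_mul_left w hw2) _
        _ ≤ w * wt E + w * ∑ j : Fin m, wt (f j) :=
            Nat.add_le_add_right (Nat.le_mul_of_pos_left _ hw) _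
        _ = w * (wt E + ∑ j : Fin m, wt (f j)) := by ring
        _ ≤ w * wt e := Nat.mul_le_mul_left w hw3
    · -- all g i nonzero: time-like logical of weight ≥ m + 1
      right
      push_neg at hg
      have hsum : m + 1 ≤ ∑ i : Fin (m + 1), wt (g i) := by
        calc m + 1 = ∑ _i : Fin (m + 1), 1 := by simp
          _ ≤ ∑ i : Fin (m + 1), wt (g i) :=
              Finset.sum_le_sum (fun i _ => wt_pos (hg i))
      calc m + 1 ≤ ∑ i : Fin (m + 1), wt (g i) := hsum
        _ ≤ wt e := by rw [hwdec, hwg]; omega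
  · -- part (b)
    intro e hZe hJe
    have hZ0 : HZ.mulVec (fun j => e (Sum.inl j)) = 0 := by
      funext a
      have h := congrFun hZe (Sum.inl a)
      simpa [HMMZ, Matrix.mulVec, dotProduct, Fintype.sum_sum_type,
        Fintype.sum_prod_type] using h
    have hJ0 : JZC.mulVec (fun j => e (Sum.inl j)) ≠ 0 := by
      intro h0
      apply hJe
      funext a
      have := congrFun h0 a
      simpa [JMMZ, Matrix.mulVec, dotProduct, Fintype.sum_sum_type,
        Fintype.sum_prod_type] using this
    refine le_trans (hdZ _ hZ0 hJ0) ?_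
    rw [wt_sum_idx e]
    exact Nat.le_add_right _ _
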